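/- Let D ≥ 1 and let T be a lattice triangle (vertices in ℤ²) with all side lengths ≥ D and all angles ≤ 2π/3. Then the area of T is at least S(D)/2, where S(D) is the doubled minimal area over all lattice triangles with side lengths ≥ D and all angles ≤ π/2. -/

import Mathlib

noncomputable section

/-- Points of the Euclidean plane. -/
abbrev Pt := EuclideanSpace ℝ (Fin 2)

/-- The area of the triangle with vertices `p`, `q`, `r`. -/
def triArea (p q r : Pt) : ℝ :=
  |(q 0 - p 0) * (r 1 - p 1) - (q 1 - p 1) * (r 0 - p 0)| / 2

/-- A point of the plane belonging to the integer lattice `ℤ²`. -/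
def IsLatticePt (p : Pt) : Prop := (∃ a : ℤ, p 0 = a) ∧ (∃ b : ℤ, p 1 = b)

/-- The set of doubled areas of lattice triangles with all side lengths at least `D`
and all angles at most `π/2`.  Its infimum is `S(D)`. -/
def admissibleDoubledAreas (D : ℝ) : Set ℝ :=
  {s | ∃ p q r : Pt, IsLatticePt p ∧ IsLatticePt q ∧ IsLatticePt r ∧
        D ≤ dist p q ∧ D ≤ dist q r ∧ D ≤ dist p r ∧
        EuclideanGeometry.angle q p r ≤ Real.pi / 2 ∧
        EuclideanGeometry.angle p q r ≤ Real.pi / 2 ∧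
        EuclideanGeometry.angle p r q ≤ Real.pi / 2 ∧
        s = 2 * triArea p q r}

namespace Stmt1Aux

open Real
open scoped RealInnerProductSpace

lemma inner_coords (u v : Pt) : ⟪u, v⟫ = u 0 * v 0 + u 1 * v 1 := by
  rw [PiLp.inner_apply]; simp [Fin.sum_univ_two, RCLike.inner_apply]; ring

lemma norm_coords (u : Pt) : ‖u‖ = Real.sqrt (u 0 ^ 2 + u 1 ^ 2) := by
  rw [EuclideanSpace.norm_eq]; simp [Fin.sum_univ_two, sq_abs]

lemma dist_coords (p q : Pt) :
    dist p q = Real.sqrt ((p 0 - q 0) ^ 2 + (p 1 - q 1) ^ 2) := by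
  rw [EuclideanSpace.dist_eq]; simp [Fin.sum_univ_two, Real.dist_eq, sq_abs]

lemma sub_apply (u v : Pt) (i : Fin 2) : (u - v) i = u i - v i := rfl

/-- From `D ≤ dist p q` with `0 ≤ D`, squared form. -/
lemma dist_sq (D : ℝ) (hD : 0 ≤ D) {p q : Pt} (h : D ≤ dist p q) :
    D ^ 2 ≤ (q 0 - p 0) ^ 2 + (q 1 - p 1) ^ 2 := by
  rw [dist_coords] at h
  have h2 : D ^ 2 ≤ ((p 0 - q 0) ^ 2 + (p 1 - q 1) ^ 2) := by
    have := Real.sq_sqrt (by positivity : (0:ℝ) ≤ (p 0 - q 0) ^ 2 + (p 1 - q 1) ^ 2)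
    nlinarith [Real.sqrt_nonneg ((p 0 - q 0) ^ 2 + (p 1 - q 1) ^ 2)]
  nlinarith [h2]

/-- angle condition `≤ 2π/3` in coordinates. -/
lemma angle_cond {u v : Pt} (hu : u ≠ 0) (hv : v ≠ 0)
    (h : InnerProductGeometry.angle u v ≤ 2 * Real.pi / 3) :
    0 ≤ 2 * (u 0 * v 0 + u 1 * v 1) +
      Real.sqrt (u 0 ^ 2 + u 1 ^ 2) * Real.sqrt (v 0 ^ 2 + v 1 ^ 2) := by
  have hcos : Real.cos (2 * Real.pi / 3) ≤ Real.cos (InnerProductGeometry.angle u v) :=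
    Real.cos_le_cos_of_nonneg_of_le_pi (InnerProductGeometry.angle_nonneg u v)
      (by nlinarith [Real.pi_pos]) h
  rw [show (2 * Real.pi / 3) = Real.pi - Real.pi / 3 by ring, Real.cos_pi_sub,
    Real.cos_pi_div_three, InnerProductGeometry.cos_angle] at hcos
  have hnu : 0 < ‖u‖ := norm_pos_iff.mpr hu
  have hnv : 0 < ‖v‖ := norm_pos_iff.mpr hv
  have hP : 0 < ‖u‖ * ‖v‖ := by positivity
  have h2 : -(1/2) * (‖u‖ * ‖v‖) ≤ ⟪u, v⟫ := by
    calc -(1/2) * (‖u‖ * ‖v‖) ≤ (⟪u, v⟫ / (‖u‖ * ‖v‖)) * (‖u‖ * ‖v‖) :=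
          mul_le_mul_of_nonneg_right (by linarith) hP.le
      _ = ⟪u, v⟫ := div_mul_cancel₀ _ (ne_of_gt hP)
  rw [inner_coords, norm_coords u, norm_coords v] at h2
  linarith

/-- angle `≤ π/2` from nonneg inner product. -/
lemma angle_le {u v : Pt} (h : 0 ≤ u 0 * v 0 + u 1 * v 1) :
    InnerProductGeometry.angle u v ≤ Real.pi / 2 := by
  rw [InnerProductGeometry.angle, Real.arccos_le_pi_div_two]
  apply div_nonneg
  · rw [inner_coords]; exact h
  · positivity


/-- All the conditions on the vector pair `u = (a,b)`, `v = (c,d)` spanning the triangle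
`(0, u, v)`: integrality, side lengths `≥ D`, all angles `≤ 2π/3` in cosine form. -/
structure Good (D a b c d : ℝ) : Prop where
  hint : ∃ za zb zc zd : ℤ, a = za ∧ b = zb ∧ c = zc ∧ d = zd
  h1 : D ^ 2 ≤ a ^ 2 + b ^ 2
  h2 : D ^ 2 ≤ c ^ 2 + d ^ 2
  h3 : D ^ 2 ≤ (a - c) ^ 2 + (b - d) ^ 2
  cp : 0 ≤ 2 * (a * c + b * d) +
      Real.sqrt (a ^ 2 + b ^ 2) * Real.sqrt (c ^ 2 + d ^ 2)
  cq : 0 ≤ 2 * ((a ^ 2 + b ^ 2) - (a * c + b * d)) +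
      Real.sqrt (a ^ 2 + b ^ 2) * Real.sqrt ((a - c) ^ 2 + (b - d) ^ 2)
  cr : 0 ≤ 2 * ((c ^ 2 + d ^ 2) - (a * c + b * d)) +
      Real.sqrt (c ^ 2 + d ^ 2) * Real.sqrt ((a - c) ^ 2 + (b - d) ^ 2)

lemma good_swap {D a b c d : ℝ} (g : Good D a b c d) : Good D c d a b := by
  obtain ⟨⟨za, zb, zc, zd, ea, eb, ec, ed⟩, h1, h2, h3, cp, cq, cr⟩ := g
  refine ⟨⟨zc, zd, za, zb, ec, ed, ea, eb⟩, h2, h1, by linarith [h3], ?_, ?_, ?_⟩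
  · rw [mul_comm (Real.sqrt (c^2+d^2))]; linarith [cp]
  · rw [show ((c-a)^2+(d-b)^2 : ℝ) = (a-c)^2+(b-d)^2 by ring]; linarith [cr]
  · rw [show ((c-a)^2+(d-b)^2 : ℝ) = (a-c)^2+(b-d)^2 by ring]; linarith [cq]

lemma good_rebase {D a b c d : ℝ} (g : Good D a b c d) :
    Good D (-a) (-b) (c - a) (d - b) := by
  obtain ⟨⟨za, zb, zc, zd, ea, eb, ec, ed⟩, h1, h2, h3, cp, cq, cr⟩ := g
  have e1 : ((-a : ℝ)) ^ 2 + ((-b : ℝ)) ^ 2 = a ^ 2 + b ^ 2 := by ring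
  have e2 : ((-a : ℝ) - (c - a)) ^ 2 + ((-b : ℝ) - (d - b)) ^ 2 = c ^ 2 + d ^ 2 := by ring
  refine ⟨⟨-za, -zb, zc - za, zd - zb, by push_cast; rw [ea], by push_cast; rw [eb],
      by push_cast; rw [ec, ea], by push_cast; rw [ed, eb]⟩,
      by rw [e1]; exact h1, by linarith [h3], by rw [e2]; exact h2, ?_, ?_, ?_⟩
  · rw [e1, show ((c-a)^2+(d-b)^2 : ℝ) = (a-c)^2+(b-d)^2 by ring]; linarith [cq]
  · rw [e1, e2]; linarith [cp]
  · rw [show ((c-a)^2+(d-b)^2 : ℝ) = (a-c)^2+(b-d)^2 by ring, e2]; linarith [cr]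

/-- The key inequality: the `2π/3`-condition at a base vertex of the reflected triangle. -/
lemma step_ineq (A B s X Z : ℝ) (hA : 1 ≤ A) (hB : 1 ≤ B) (hs : s < 0)
    (hX : 0 ≤ X) (hZ : 0 ≤ Z) (hX2 : X ^ 2 = A) (hZ2 : Z ^ 2 = A + B + 2 * s)
    (hAB : 4 * s ^ 2 ≤ A * B) : 0 ≤ 2 * (A + s) + X * Z := by
  rcases le_or_gt 0 (A + s) with h | h
  · nlinarith [mul_nonneg hX hZ]
  · have h1 : 4 * (A + s) ^ 2 ≤ (X * Z) ^ 2 := by nlinarith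
    nlinarith [mul_nonneg hX hZ, h1]

lemma good_reflect {D a b c d : ℝ} (hD : 1 ≤ D) (g : Good D a b c d)
    (hs : a * c + b * d < 0) : Good D (-a) (-b) c d := by
  obtain ⟨⟨za, zb, zc, zd, ea, eb, ec, ed⟩, h1, h2, h3, cp, cq, cr⟩ := g
  have e1 : ((-a : ℝ)) ^ 2 + ((-b : ℝ)) ^ 2 = a ^ 2 + b ^ 2 := by ring
  have e2 : ((-a : ℝ) - c) ^ 2 + ((-b : ℝ) - d) ^ 2 = (a + c) ^ 2 + (b + d) ^ 2 := by ring
  have hD2 : 1 ≤ D ^ 2 := by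
    have := mul_le_mul hD hD (by norm_num) (by linarith : (0:ℝ) ≤ D)
    calc (1:ℝ) = 1 * 1 := by ring
      _ ≤ D * D := this
      _ = D ^ 2 := by ring
  set X := Real.sqrt (a ^ 2 + b ^ 2) with hXdef
  set Y := Real.sqrt (c ^ 2 + d ^ 2) with hYdef
  have hX : 0 ≤ X := Real.sqrt_nonneg _
  have hY : 0 ≤ Y := Real.sqrt_nonneg _
  have hX2 : X ^ 2 = a ^ 2 + b ^ 2 := Real.sq_sqrt (by positivity)
  have hY2 : Y ^ 2 = c ^ 2 + d ^ 2 := Real.sq_sqrt (by positivity)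
  have hA1 : 1 ≤ a ^ 2 + b ^ 2 := le_trans hD2 h1
  have hB1 : 1 ≤ c ^ 2 + d ^ 2 := le_trans hD2 h2
  have hXY : -(2 * (a * c + b * d)) ≤ X * Y := by linarith [cp]
  have hXYnn : 0 ≤ X * Y := mul_nonneg hX hY
  have hXY2 : (X * Y) ^ 2 = (a ^ 2 + b ^ 2) * (c ^ 2 + d ^ 2) := by rw [mul_pow, hX2, hY2]
  have hAB : 4 * (a * c + b * d) ^ 2 ≤ (a ^ 2 + b ^ 2) * (c ^ 2 + d ^ 2) := by
    have h4 := mul_self_le_mul_self (by linarith : (0:ℝ) ≤ -(2 * (a * c + b * d))) hXY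
    linarith [h4, hXY2]
  -- the new third side
  set Z := Real.sqrt ((a + c) ^ 2 + (b + d) ^ 2) with hZdef
  have hZ : 0 ≤ Z := Real.sqrt_nonneg _
  have hZ2 : Z ^ 2 = (a ^ 2 + b ^ 2) + (c ^ 2 + d ^ 2) + 2 * (a * c + b * d) :=
    (Real.sq_sqrt (by positivity)).trans (by ring)
  have hnew3 : D ^ 2 ≤ (a + c) ^ 2 + (b + d) ^ 2 := by
    -- A + B + 2s ≥ A + B - XY ≥ XY ≥ D²
    have hXD : D ≤ X := (Real.le_sqrt' (by linarith)).mpr h1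
    have hYD : D ≤ Y := (Real.le_sqrt' (by linarith)).mpr h2
    have hDXY := mul_le_mul hXD hYD (by linarith : (0:ℝ) ≤ D) hX
    linarith [sq_nonneg (X - Y), hXY, hDXY, hX2, hY2]
  refine ⟨⟨-za, -zb, zc, zd, by push_cast; rw [ea], by push_cast; rw [eb], ec, ed⟩,
      by rw [e1]; exact h1, h2, by rw [e2]; exact hnew3, ?_, ?_, ?_⟩
  · -- angle at origin: now acute
    rw [e1, ← hXdef, ← hYdef]
    linarith [hXYnn, hs]
  · -- angle at -u
    rw [e1, e2, ← hXdef, ← hZdef]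
    have := step_ineq (a ^ 2 + b ^ 2) (c ^ 2 + d ^ 2) (a * c + b * d) X Z
      hA1 hB1 hs hX hZ hX2 hZ2 hAB
    linarith [this]
  · -- angle at v
    rw [e2, ← hYdef, ← hZdef]
    have := step_ineq (c ^ 2 + d ^ 2) (a ^ 2 + b ^ 2) (a * c + b * d) Y Z
      hB1 hA1 hs hY hZ hY2 (by linarith [hZ2] : Z ^ 2 = (c^2+d^2) + (a^2+b^2) + 2*(a*c+b*d))
      (by linarith [hAB])
    linarith [this]


def mkPt (x y : ℝ) : Pt := (WithLp.equiv 2 (Fin 2 → ℝ)).symm ![x, y]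

@[simp] lemma mkPt_apply0 (x y : ℝ) : mkPt x y 0 = x := rfl
@[simp] lemma mkPt_apply1 (x y : ℝ) : mkPt x y 1 = y := rfl

lemma one_le_sq {D : ℝ} (hD : 1 ≤ D) : 1 ≤ D ^ 2 := by nlinarith

lemma int_le_neg_one {x : ℝ} (hx : ∃ z : ℤ, x = z) (h : x < 0) : x ≤ -1 := by
  obtain ⟨z, rfl⟩ := hx
  have hz : z < 0 := by exact_mod_cast h
  have hz' : z ≤ -1 := by omega
  exact_mod_cast hz'

lemma bdd (D : ℝ) : BddBelow (admissibleDoubledAreas D) := by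
  refine ⟨0, fun s hs => ?_⟩
  obtain ⟨p, q, r, _, _, _, _, _, _, _, _, _, hs⟩ := hs
  rw [hs, triArea]
  positivity

lemma mem_adm {D a b c d : ℝ} (hD : 1 ≤ D) (g : Good D a b c d)
    (sp : 0 ≤ a * c + b * d) (sq' : 0 ≤ (a ^ 2 + b ^ 2) - (a * c + b * d))
    (sr : 0 ≤ (c ^ 2 + d ^ 2) - (a * c + b * d)) :
    |a * d - b * c| ∈ admissibleDoubledAreas D := by
  obtain ⟨za, zb, zc, zd, ea, eb, ec, ed⟩ := g.hint
  have hD0 : (0 : ℝ) < D := by linarith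
  refine ⟨mkPt 0 0, mkPt a b, mkPt c d,
    ⟨⟨0, by simp⟩, ⟨0, by simp⟩⟩, ⟨⟨za, by simp [ea]⟩, ⟨zb, by simp [eb]⟩⟩,
    ⟨⟨zc, by simp [ec]⟩, ⟨zd, by simp [ed]⟩⟩, ?_, ?_, ?_, ?_, ?_, ?_, ?_⟩
  · rw [dist_coords]
    simp only [mkPt_apply0, mkPt_apply1]
    rw [show ((0:ℝ) - a) ^ 2 + ((0:ℝ) - b) ^ 2 = a ^ 2 + b ^ 2 by ring]
    exact (Real.le_sqrt' hD0).mpr g.h1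
  · rw [dist_coords]
    simp only [mkPt_apply0, mkPt_apply1]
    exact (Real.le_sqrt' hD0).mpr g.h3
  · rw [dist_coords]
    simp only [mkPt_apply0, mkPt_apply1]
    rw [show ((0:ℝ) - c) ^ 2 + ((0:ℝ) - d) ^ 2 = c ^ 2 + d ^ 2 by ring]
    exact (Real.le_sqrt' hD0).mpr g.h2
  · simp only [EuclideanGeometry.angle, vsub_eq_sub]
    apply angle_le
    simp only [sub_apply, mkPt_apply0, mkPt_apply1]
    nlinarith [sp]
  · simp only [EuclideanGeometry.angle, vsub_eq_sub]
    apply angle_le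
    simp only [sub_apply, mkPt_apply0, mkPt_apply1]
    nlinarith [sq']
  · simp only [EuclideanGeometry.angle, vsub_eq_sub]
    apply angle_le
    simp only [sub_apply, mkPt_apply0, mkPt_apply1]
    nlinarith [sr]
  · rw [triArea]
    simp only [mkPt_apply0, mkPt_apply1]
    rw [show (a - 0) * (d - 0) - (b - 0) * (c - 0) = a * d - b * c by ring]
    ring

lemma core (D : ℝ) (hD : 1 ≤ D) : ∀ n : ℕ, ∀ a b c d : ℝ, Good D a b c d →
    a ^ 2 + b ^ 2 + c ^ 2 + d ^ 2 + (a - c) ^ 2 + (b - d) ^ 2 ≤ (n : ℝ) →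
    sInf (admissibleDoubledAreas D) ≤ |a * d - b * c| := by
  intro n
  induction n with
  | zero =>
    intro a b c d g hm
    exfalso
    push_cast at hm
    linarith [g.h1, g.h2, g.h3, one_le_sq hD, sq_nonneg (a - c), sq_nonneg (b - d),
      sq_nonneg c, sq_nonneg d]
  | succ n ih =>
    intro a b c d g hm
    push_cast at hm
    obtain ⟨za, zb, zc, zd, ea, eb, ec, ed⟩ := g.hint
    by_cases hp : 0 ≤ a * c + b * d
    · by_cases hq : 0 ≤ (a ^ 2 + b ^ 2) - (a * c + b * d)
      · by_cases hr : 0 ≤ (c ^ 2 + d ^ 2) - (a * c + b * d)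
        · exact csInf_le (bdd D) (mem_adm hD g hp hq hr)
        · -- obtuse at r : rebase there, reflect
          push_neg at hr
          have hs1 : (c ^ 2 + d ^ 2) - (a * c + b * d) ≤ -1 :=
            int_le_neg_one ⟨zc * zc + zd * zd - (za * zc + zb * zd),
              by rw [ea, eb, ec, ed]; push_cast; ring⟩ hr
          have g1 := good_rebase (good_swap g)
          -- g1 : Good D (-c) (-d) (a - c) (b - d)
          have g2 := good_reflect hD g1 (by nlinarith [hr])
          -- g2 : Good D c d (a - c) (b - d)  (after neg_neg)
          rw [neg_neg, neg_neg] at g2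
          have hmeas : c ^ 2 + d ^ 2 + (a - c) ^ 2 + (b - d) ^ 2
              + (c - (a - c)) ^ 2 + (d - (b - d)) ^ 2 ≤ (n : ℝ) := by nlinarith [hs1, hm]
          have := ih c d (a - c) (b - d) g2 hmeas
          rw [show c * (b - d) - d * (a - c) = -(a * d - b * c) by ring, abs_neg] at this
          exact this
      · -- obtuse at q
        push_neg at hq
        have hs1 : (a ^ 2 + b ^ 2) - (a * c + b * d) ≤ -1 :=
          int_le_neg_one ⟨za * za + zb * zb - (za * zc + zb * zd),
            by rw [ea, eb, ec, ed]; push_cast; ring⟩ hq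
        have g1 := good_rebase g
        -- g1 : Good D (-a) (-b) (c - a) (d - b)
        have g2 := good_reflect hD g1 (by nlinarith [hq])
        rw [neg_neg, neg_neg] at g2
        -- g2 : Good D a b (c - a) (d - b)
        have hmeas : a ^ 2 + b ^ 2 + (c - a) ^ 2 + (d - b) ^ 2
            + (a - (c - a)) ^ 2 + (b - (d - b)) ^ 2 ≤ (n : ℝ) := by nlinarith [hs1, hm]
        have := ih a b (c - a) (d - b) g2 hmeas
        rw [show a * (d - b) - b * (c - a) = a * d - b * c by ring] at this
        exact this
    · -- obtuse at p
      push_neg at hp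
      have hs1 : a * c + b * d ≤ -1 :=
        int_le_neg_one ⟨za * zc + zb * zd, by rw [ea, eb, ec, ed]; push_cast; ring⟩ hp
      have g2 := good_reflect hD g hp
      -- g2 : Good D (-a) (-b) c d
      have hmeas : (-a) ^ 2 + (-b) ^ 2 + c ^ 2 + d ^ 2
          + (-a - c) ^ 2 + (-b - d) ^ 2 ≤ (n : ℝ) := by nlinarith [hs1, hm]
      have := ih (-a) (-b) c d g2 hmeas
      rw [show -a * d - -b * c = -(a * d - b * c) by ring, abs_neg] at this
      exact this

end Stmt1Aux

/-- If `T` is a lattice triangle with all side lengths `≥ D` and all angles `≤ 2π/3`,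
then its area is at least `S(D)/2`, where `S(D)` is the doubled minimal area over lattice
triangles with side lengths `≥ D` and all angles `≤ π/2`. -/
theorem stmt1 (D : ℝ) (hD : 1 ≤ D) (p q r : Pt)
    (hp : IsLatticePt p) (hq : IsLatticePt q) (hr : IsLatticePt r)
    (hpq : D ≤ dist p q) (hqr : D ≤ dist q r) (hpr : D ≤ dist p r)
    (hA : EuclideanGeometry.angle q p r ≤ 2 * Real.pi / 3)
    (hB : EuclideanGeometry.angle p q r ≤ 2 * Real.pi / 3)
    (hC : EuclideanGeometry.angle p r q ≤ 2 * Real.pi / 3) :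
    sInf (admissibleDoubledAreas D) / 2 ≤ triArea p q r := by
  obtain ⟨⟨zpx, epx⟩, ⟨zpy, epy⟩⟩ := hp
  obtain ⟨⟨zqx, eqx⟩, ⟨zqy, eqy⟩⟩ := hq
  obtain ⟨⟨zrx, erx⟩, ⟨zry, ery⟩⟩ := hr
  have hD0 : (0 : ℝ) ≤ D := by linarith
  have hppq : p ≠ q := by
    intro h; rw [h] at hpq; simp at hpq; linarith
  have hppr : p ≠ r := by
    intro h; rw [h] at hpr; simp at hpr; linarith
  have hqqr : q ≠ r := by
    intro h; rw [h] at hqr; simp at hqr; linarith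
  have hu : q - p ≠ 0 := sub_ne_zero.mpr (Ne.symm hppq)
  have hv : r - p ≠ 0 := sub_ne_zero.mpr (Ne.symm hppr)
  have hu' : p - q ≠ 0 := sub_ne_zero.mpr hppq
  have hw' : r - q ≠ 0 := sub_ne_zero.mpr (Ne.symm hqqr)
  have hv'' : p - r ≠ 0 := sub_ne_zero.mpr hppr
  have hw'' : q - r ≠ 0 := sub_ne_zero.mpr hqqr
  simp only [EuclideanGeometry.angle, vsub_eq_sub] at hA hB hC
  have cA := Stmt1Aux.angle_cond hu hv hA
  have cB := Stmt1Aux.angle_cond hu' hw' hB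
  have cC := Stmt1Aux.angle_cond hv'' hw'' hC
  simp only [Stmt1Aux.sub_apply] at cA cB cC
  have g : Stmt1Aux.Good D (q 0 - p 0) (q 1 - p 1) (r 0 - p 0) (r 1 - p 1) := by
    refine ⟨⟨zqx - zpx, zqy - zpy, zrx - zpx, zry - zpy,
      by rw [eqx, epx]; push_cast; ring, by rw [eqy, epy]; push_cast; ring,
      by rw [erx, epx]; push_cast; ring, by rw [ery, epy]; push_cast; ring⟩,
      ?_, ?_, ?_, ?_, ?_, ?_⟩
    · exact Stmt1Aux.dist_sq D hD0 hpq
    · exact Stmt1Aux.dist_sq D hD0 hpr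
    · have := Stmt1Aux.dist_sq D hD0 hqr
      linarith [this]
    · linarith [cA]
    · rw [show (p 0 - q 0) ^ 2 + (p 1 - q 1) ^ 2
            = (q 0 - p 0) ^ 2 + (q 1 - p 1) ^ 2 by ring,
        show (r 0 - q 0) ^ 2 + (r 1 - q 1) ^ 2
            = ((q 0 - p 0) - (r 0 - p 0)) ^ 2 + ((q 1 - p 1) - (r 1 - p 1)) ^ 2 by ring] at cB
      linarith [cB]
    · rw [show (p 0 - r 0) ^ 2 + (p 1 - r 1) ^ 2
            = (r 0 - p 0) ^ 2 + (r 1 - p 1) ^ 2 by ring,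
        show (q 0 - r 0) ^ 2 + (q 1 - r 1) ^ 2
            = ((q 0 - p 0) - (r 0 - p 0)) ^ 2 + ((q 1 - p 1) - (r 1 - p 1)) ^ 2 by ring] at cC
      linarith [cC]
  have h2 := Stmt1Aux.core D hD
    ⌈(q 0 - p 0) ^ 2 + (q 1 - p 1) ^ 2 + (r 0 - p 0) ^ 2 + (r 1 - p 1) ^ 2
      + ((q 0 - p 0) - (r 0 - p 0)) ^ 2 + ((q 1 - p 1) - (r 1 - p 1)) ^ 2⌉₊
    (q 0 - p 0) (q 1 - p 1) (r 0 - p 0) (r 1 - p 1) g (Nat.le_ceil _)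
  have harea : triArea p q r
      = |(q 0 - p 0) * (r 1 - p 1) - (q 1 - p 1) * (r 0 - p 0)| / 2 := rfl
  rw [harea]
  linarith [h2]
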